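/- Let X be a Hilbert space over 𝕜 (𝕜 = ℝ or ℂ) and let A, B : X → X be bounded surjective linear operators. Then there exist bounded surjective linear operators T, S : X → X with A = T ∘ B and B = S ∘ A if and only if ker A = ker B. -/

import Mathlib

lemma stmt7_aux (𝕜 X : Type*) [RCLike 𝕜] [NormedAddCommGroup X]
    [InnerProductSpace 𝕜 X] [CompleteSpace X]
    (A B : X →L[𝕜] X) (hB : Function.Surjective B)
    (hker : LinearMap.ker (A : X →ₗ[𝕜] X) = LinearMap.ker (B : X →ₗ[𝕜] X)) :
    ∃ T : X →L[𝕜] X, A = T.comp B := by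
  set K : Submodule 𝕜 X := LinearMap.ker (B : X →ₗ[𝕜] X) with hK
  haveI : CompleteSpace K := (ContinuousLinearMap.isClosed_ker B).completeSpace_coe
  set f : Kᗮ →L[𝕜] X := B.comp Kᗮ.subtypeL with hf
  have hinj : LinearMap.ker (f : Kᗮ →ₗ[𝕜] X) = ⊥ := by
    rw [LinearMap.ker_eq_bot']
    rintro ⟨x, hx⟩ h
    have hxK : x ∈ K := by
      simpa [hf, hK] using h
    have : x = 0 := by
      have := Submodule.inner_right_of_mem_orthogonal hxK hx
      simpa using this
    simpa using this
  have hsurj : LinearMap.range (f : Kᗮ →ₗ[𝕜] X) = ⊤ := by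
    rw [LinearMap.range_eq_top]
    intro y
    obtain ⟨x, rfl⟩ := hB y
    obtain ⟨k, hk, p, hp, rfl⟩ := K.exists_add_mem_mem_orthogonal x
    refine ⟨⟨p, hp⟩, ?_⟩
    have hk0 : B k = 0 := hk
    simp [hf, hk0]
  let e := ContinuousLinearEquiv.ofBijective f hinj hsurj
  refine ⟨(A.comp Kᗮ.subtypeL).comp (e.symm : X →L[𝕜] Kᗮ), ?_⟩
  ext x
  obtain ⟨k, hk, p, hp, rfl⟩ := K.exists_add_mem_mem_orthogonal x
  have hAk : A k = 0 := by
    have : k ∈ LinearMap.ker (A : X →ₗ[𝕜] X) := by rw [hker]; exact hk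
    simpa using this
  have hBk : B k = 0 := hk
  have hfp : f ⟨p, hp⟩ = B (k + p) := by simp [hf, hBk]
  have hsym : e.symm (B (k + p)) = ⟨p, hp⟩ := by
    rw [← hfp]; exact e.symm_apply_apply _
  show A (k + p) = A ((e.symm (B (k + p)) : Kᗮ) : X)
  rw [hsym]
  simp [hAk]

theorem stmt7 (𝕜 X : Type*) [RCLike 𝕜] [NormedAddCommGroup X]
    [InnerProductSpace 𝕜 X] [CompleteSpace X]
    (A B : X →L[𝕜] X) (hA : Function.Surjective A) (hB : Function.Surjective B) :
    (∃ T S : X →L[𝕜] X, Function.Surjective T ∧ Function.Surjective S ∧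
        A = T.comp B ∧ B = S.comp A) ↔
      LinearMap.ker (A : X →ₗ[𝕜] X) = LinearMap.ker (B : X →ₗ[𝕜] X) := by
  constructor
  · rintro ⟨T, S, -, -, hTB, hSA⟩
    apply le_antisymm
    · intro x hx
      have : A x = 0 := hx
      have : S (A x) = 0 := by rw [this]; simp
      show B x = 0
      rw [hSA]; exact this
    · intro x hx
      have : B x = 0 := hx
      have : T (B x) = 0 := by rw [this]; simp
      show A x = 0
      rw [hTB]; exact this
  · intro hker
    obtain ⟨T, hT⟩ := stmt7_aux 𝕜 X A B hB hker
    obtain ⟨S, hS⟩ := stmt7_aux 𝕜 X B A hA hker.symm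
    refine ⟨T, S, ?_, ?_, hT, hS⟩
    · intro y
      obtain ⟨x, rfl⟩ := hA y
      exact ⟨B x, by rw [hT]; rfl⟩
    · intro y
      obtain ⟨x, rfl⟩ := hB y
      exact ⟨A x, by rw [hS]; rfl⟩
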